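/- Let a, m, n be positive integers with gcd(m,n) = 1 and m < n, and let C be the Fermat-type curve of degree amn on the weighted projective plane ℙ(1,m,n), defined by x₀^(amn) + x₁^(an) = x₂^(am). Then C is a smooth projective curve of genus g(C) = ((am-1)(an-2) + a(m-1))/2. -/

import Mathlib

open MvPolynomial

/-- The defining polynomial `x₀^(amn) + x₁^(an) - x₂^(am)` of a Fermat-type curve on
the weighted projective plane `ℙ(1,m,n)`. -/
noncomputable def fermatPoly (a m n : ℕ) : MvPolynomial (Fin 3) ℂ :=
  X 0 ^ (a * m * n) + X 1 ^ (a * n) - X 2 ^ (a * m)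

/-- The degree-`d` part of the homogeneous coordinate ring
`ℂ[x₀,x₁,x₂]/(fermatPoly)` for the weighted grading `deg xᵢ = (1, m, n)`. -/
noncomputable def fermatCoordRingPiece (a m n d : ℕ) :
    Submodule ℂ (MvPolynomial (Fin 3) ℂ ⧸ Ideal.span {fermatPoly a m n}) :=
  (weightedHomogeneousSubmodule ℂ ![1, m, n] d).map
    (Ideal.Quotient.mkₐ ℂ (Ideal.span {fermatPoly a m n})).toLinearMap

/-! ### Auxiliary lemmas -/

section Aux

open Finset

theorem FW.weight_single_apply {w : Fin 3 → ℕ} (i : Fin 3) (k : ℕ) :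
    Finsupp.weight w (Finsupp.single i k) = k * w i := by
  rw [Finsupp.weight_apply, Finsupp.sum_single_index] <;> simp

theorem FW.xpow_whom (w : Fin 3 → ℕ) (i : Fin 3) (k : ℕ) :
    IsWeightedHomogeneous w (X i ^ k : MvPolynomial (Fin 3) ℂ) (k * w i) := by
  rw [X_pow_eq_monomial]
  exact isWeightedHomogeneous_monomial _ _ _ (FW.weight_single_apply i k)

theorem FW.fermat_whom (a m n : ℕ) :
    IsWeightedHomogeneous ![1, m, n] (fermatPoly a m n) (a * m * n) := by
  rw [← mem_weightedHomogeneousSubmodule]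
  show (X 0 ^ (a*m*n) + X 1 ^ (a*n) - X 2 ^ (a*m) : MvPolynomial (Fin 3) ℂ) ∈ _
  refine sub_mem (add_mem ?_ ?_) ?_ <;> rw [mem_weightedHomogeneousSubmodule]
  · simpa using FW.xpow_whom ![1,m,n] 0 (a*m*n)
  · simpa [show a*n*m = a*m*n from by ring] using FW.xpow_whom ![1,m,n] 1 (a*n)
  · simpa [show a*m*n = a*m*n from rfl, mul_assoc] using FW.xpow_whom ![1,m,n] 2 (a*m)

theorem FW.weight_set_finite {w : Fin 3 → ℕ} (hw : ∀ i, w i ≠ 0) (e : ℕ) :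
    {x : Fin 3 →₀ ℕ | Finsupp.weight w x = e}.Finite := by
  apply Set.Finite.ofFinset (Finset.filter (fun x => Finsupp.weight w x = e)
    (Finset.image (fun p : ℕ × ℕ × ℕ => Finsupp.equivFunOnFinite.symm ![p.1, p.2.1, p.2.2])
      ((Finset.range (e+1)) ×ˢ (Finset.range (e+1)) ×ˢ (Finset.range (e+1)))))
  intro x
  simp only [Finset.mem_filter, Set.mem_setOf_eq, Finset.mem_image, Finset.mem_product,
    Finset.mem_range]
  constructor
  · rintro ⟨⟨p, ⟨h1, h2, h3⟩, rfl⟩, h⟩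
    exact h
  · intro h
    refine ⟨⟨⟨x 0, x 1, x 2⟩, ⟨?_, ?_, ?_⟩, ?_⟩, h⟩
    · have := Finsupp.le_weight w (hw 0) x; omega
    · show x 1 < e + 1
      have := Finsupp.le_weight w (hw 1) x; omega
    · show x 2 < e + 1
      have := Finsupp.le_weight w (hw 2) x; omega
    · ext i
      fin_cases i <;> simp

noncomputable def FW.weightPieceEquiv (w : Fin 3 → ℕ) (e : ℕ) :
    (weightedHomogeneousSubmodule ℂ w e) ≃ₗ[ℂ]
      ({x : Fin 3 →₀ ℕ | Finsupp.weight w x = e} →₀ ℂ) :=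
  (LinearEquiv.ofEq _ _ (weightedHomogeneousSubmodule_eq_finsupp_supported ℂ w e)).trans
    (AddMonoidAlgebra.supportedEquivFinsupp _)

theorem FW.findim_weightPiece {w : Fin 3 → ℕ} (hw : ∀ i, w i ≠ 0) (e : ℕ) :
    FiniteDimensional ℂ (weightedHomogeneousSubmodule ℂ w e) := by
  have : Finite {x : Fin 3 →₀ ℕ | Finsupp.weight w x = e} :=
    (FW.weight_set_finite hw e).to_subtype
  have := Fintype.ofFinite {x : Fin 3 →₀ ℕ | Finsupp.weight w x = e}
  exact Module.Finite.equiv (FW.weightPieceEquiv w e).symm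

theorem FW.finrank_weightPiece {w : Fin 3 → ℕ} (hw : ∀ i, w i ≠ 0) (e : ℕ) :
    Module.finrank ℂ (weightedHomogeneousSubmodule ℂ w e) =
      Nat.card {x : Fin 3 →₀ ℕ // Finsupp.weight w x = e} := by
  have : Finite {x : Fin 3 →₀ ℕ | Finsupp.weight w x = e} :=
    (FW.weight_set_finite hw e).to_subtype
  have := Fintype.ofFinite {x : Fin 3 →₀ ℕ | Finsupp.weight w x = e}
  rw [(FW.weightPieceEquiv w e).finrank_eq, Module.finrank_finsupp_self]
  exact (Nat.card_eq_fintype_card).symm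

theorem FW.whc_mul_homog {σ : Type*} {w : σ → ℕ} {F : MvPolynomial σ ℂ} {D : ℕ}
    (hF : IsWeightedHomogeneous w F D) (c : MvPolynomial σ ℂ) (e : ℕ) :
    weightedHomogeneousComponent w (e + D) (c * F) =
      (weightedHomogeneousComponent w e c) * F := by
  induction c using MvPolynomial.induction_on' with
  | monomial u r =>
    by_cases hu : Finsupp.weight w u = e
    · have hmon : IsWeightedHomogeneous w (monomial u r) e :=
        isWeightedHomogeneous_monomial _ _ _ hu
      rw [IsWeightedHomogeneous.weightedHomogeneousComponent_same (hmon.mul hF),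
        IsWeightedHomogeneous.weightedHomogeneousComponent_same hmon]
    · have hmon : IsWeightedHomogeneous w (monomial u r) (Finsupp.weight w u) :=
        isWeightedHomogeneous_monomial _ _ _ rfl
      rw [IsWeightedHomogeneous.weightedHomogeneousComponent_ne _ (hmon.mul hF)
        (by omega), IsWeightedHomogeneous.weightedHomogeneousComponent_ne _ hmon (Ne.symm hu),
        zero_mul]
  | add p q hp hq =>
    rw [add_mul, map_add, map_add, hp, hq, add_mul]

theorem FW.homog_mem_span_factor {σ : Type*} {w : σ → ℕ} {F : MvPolynomial σ ℂ} {D : ℕ}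
    (hF : IsWeightedHomogeneous w F D)
    {p : MvPolynomial σ ℂ} {d : ℕ} (hd : D ≤ d)
    (hp : IsWeightedHomogeneous w p d) (hmem : p ∈ Ideal.span {F}) :
    ∃ q : MvPolynomial σ ℂ, IsWeightedHomogeneous w q (d - D) ∧ p = q * F := by
  obtain ⟨c, hc⟩ := Ideal.mem_span_singleton'.1 hmem
  refine ⟨weightedHomogeneousComponent w (d - D) c,
    weightedHomogeneousComponent_isWeightedHomogeneous _ _, ?_⟩
  have := FW.whc_mul_homog hF c (d - D)
  rw [Nat.sub_add_cancel hd, hc] at this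
  rw [← this, IsWeightedHomogeneous.weightedHomogeneousComponent_same hp]

theorem FW.finrank_quotient_piece {σ : Type*} {w : σ → ℕ} {F : MvPolynomial σ ℂ} {D : ℕ}
    (hF : IsWeightedHomogeneous w F D) (hFne : F ≠ 0)
    {d : ℕ} (hd : D ≤ d)
    [FiniteDimensional ℂ (weightedHomogeneousSubmodule ℂ w d)] :
    Module.finrank ℂ ((weightedHomogeneousSubmodule ℂ w d).map
      (Ideal.Quotient.mkₐ ℂ (Ideal.span {F})).toLinearMap)
      + Module.finrank ℂ (weightedHomogeneousSubmodule ℂ w (d - D))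
      = Module.finrank ℂ (weightedHomogeneousSubmodule ℂ w d) := by
  classical
  set I := Ideal.span {F}
  set φ : (weightedHomogeneousSubmodule ℂ w d) →ₗ[ℂ] (MvPolynomial σ ℂ ⧸ I) :=
    (Ideal.Quotient.mkₐ ℂ I).toLinearMap.comp (weightedHomogeneousSubmodule ℂ w d).subtype
    with hφ
  have hrange : LinearMap.range φ = (weightedHomogeneousSubmodule ℂ w d).map
      (Ideal.Quotient.mkₐ ℂ I).toLinearMap := by
    rw [hφ, LinearMap.range_comp, Submodule.range_subtype]
  have hmemmul : ∀ q : MvPolynomial σ ℂ, IsWeightedHomogeneous w q (d - D) →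
      q * F ∈ weightedHomogeneousSubmodule ℂ w d := by
    intro q hq
    have := hq.mul hF
    rwa [Nat.sub_add_cancel hd] at this
  set μ : (weightedHomogeneousSubmodule ℂ w (d - D)) →ₗ[ℂ]
      (weightedHomogeneousSubmodule ℂ w d) :=
    { toFun := fun q => ⟨q.1 * F, hmemmul q.1 q.2⟩
      map_add' := by intro x y; ext; simp [add_mul]
      map_smul' := by intro c x; ext; simp [smul_mul_assoc] } with hμ
  have hμinj : Function.Injective μ := by
    intro x y hxy
    have : (x.1 - y.1) * F = 0 := by
      have := congrArg (fun z : (weightedHomogeneousSubmodule ℂ w d) => z.1) hxy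
      simp only [hμ, LinearMap.coe_mk, AddHom.coe_mk] at this
      rw [sub_mul, this, sub_self]
    rcases mul_eq_zero.1 this with h | h
    · exact Subtype.ext (by rwa [sub_eq_zero] at h)
    · exact absurd h hFne
  have hker : LinearMap.ker φ = LinearMap.range μ := by
    ext x
    simp only [LinearMap.mem_ker, LinearMap.mem_range, hφ, LinearMap.comp_apply,
      Submodule.coe_subtype, AlgHom.toLinearMap_apply, Ideal.Quotient.mkₐ_eq_mk]
    rw [Ideal.Quotient.eq_zero_iff_mem]
    constructor
    · intro hx
      obtain ⟨q, hq, hqe⟩ := FW.homog_mem_span_factor hF hd x.2 hx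
      exact ⟨⟨q, hq⟩, Subtype.ext (by simp [hμ, hqe])⟩
    · rintro ⟨q, rfl⟩
      simp only [hμ, LinearMap.coe_mk, AddHom.coe_mk]
      exact Ideal.mul_mem_left _ _ (Ideal.subset_span rfl)
  have h1 := LinearMap.finrank_range_add_finrank_ker φ
  rw [hrange, hker, LinearMap.finrank_range_of_inj hμinj] at h1
  exact h1

/-- number of lattice points (i,j) with m*i + n*j ≤ d -/
def FW.cnt (m n d : ℕ) : ℕ := ((Finset.range (d+1) ×ˢ Finset.range (d+1)).filter
  (fun p : ℕ × ℕ => m * p.1 + n * p.2 ≤ d)).card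

theorem FW.card_weight_eq_cnt {m n : ℕ} (hm : 0 < m) (hn : 0 < n) (d : ℕ) :
    Nat.card {x : Fin 3 →₀ ℕ // Finsupp.weight ![1, m, n] x = d} = FW.cnt m n d := by
  have hw : ∀ x : Fin 3 →₀ ℕ, Finsupp.weight ![1, m, n] x = x 0 + m * x 1 + n * x 2 := by
    intro x
    rw [Finsupp.weight_apply, Finsupp.sum_fintype]
    · simp [Fin.sum_univ_three, smul_eq_mul]; ring
    · intro i; simp
  have e1 : {x : Fin 3 →₀ ℕ // Finsupp.weight ![1, m, n] x = d} ≃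
      {p : ℕ × ℕ // m * p.1 + n * p.2 ≤ d} :=
    { toFun := fun x => ⟨(x.1 1, x.1 2), by
        show m * (x.1 1) + n * (x.1 2) ≤ d
        have := x.2; rw [hw] at this; omega⟩
      invFun := fun p => ⟨Finsupp.equivFunOnFinite.symm
          ![d - (m * p.1.1 + n * p.1.2), p.1.1, p.1.2], by
        rw [hw]
        have := p.2
        simp only [Finsupp.equivFunOnFinite_symm_apply_apply]
        simp only [Matrix.cons_val_zero, Matrix.cons_val_one, Matrix.head_cons,
          Matrix.cons_val_two, Matrix.tail_cons]
        omega⟩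
      left_inv := by
        rintro ⟨x, hx⟩
        ext i
        rw [hw] at hx
        simp only [Finsupp.equivFunOnFinite_symm_apply_apply]
        fin_cases i <;> simp <;> omega
      right_inv := by
        rintro ⟨⟨p1, p2⟩, hp⟩
        ext <;> simp }
  rw [Nat.card_congr e1]
  have e2 : {p : ℕ × ℕ // m * p.1 + n * p.2 ≤ d} ≃
      {p : ℕ × ℕ // p ∈ ((Finset.range (d+1) ×ˢ Finset.range (d+1)).filter
        (fun p : ℕ × ℕ => m * p.1 + n * p.2 ≤ d))} := by
    apply Equiv.subtypeEquivRight
    intro p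
    simp only [Finset.mem_filter, Finset.mem_product, Finset.mem_range]
    constructor
    · intro h
      have h1 : p.1 ≤ m * p.1 := Nat.le_mul_of_pos_left _ hm
      have h2 : p.2 ≤ n * p.2 := Nat.le_mul_of_pos_left _ hn
      exact ⟨⟨by omega, by omega⟩, h⟩
    · exact fun h => h.2
  rw [Nat.card_congr e2, Nat.card_eq_finsetCard]
  rfl

theorem FW.cnt_split {m n d : ℕ} (hm : 0 < m) (hn : 0 < n) (hd : m * n ≤ d) :
    FW.cnt m n d = FW.cnt m n (d - m * n) +
      ((Finset.range n ×ˢ Finset.range (d+1)).filter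
        (fun p : ℕ × ℕ => m * p.1 + n * p.2 ≤ d)).card := by
  classical
  unfold FW.cnt
  rw [← Finset.card_filter_add_card_filter_not
    (p := fun p : ℕ × ℕ => n ≤ p.1) (s := (Finset.range (d+1) ×ˢ Finset.range (d+1)).filter
      (fun p : ℕ × ℕ => m * p.1 + n * p.2 ≤ d))]
  congr 1
  · rw [Finset.filter_filter]
    apply Finset.card_nbij' (fun p : ℕ × ℕ => (p.1 - n, p.2))
      (fun p : ℕ × ℕ => (p.1 + n, p.2))
    · intro p hp
      simp only [Finset.mem_coe, Finset.mem_filter, Finset.mem_product, Finset.mem_range] at hp ⊢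
      obtain ⟨⟨h1, h2⟩, h3, h4⟩ := hp
      have key : m * p.1 = m * (p.1 - n) + m * n := by
        rw [← Nat.mul_add]; congr 1; omega
      have a1 : p.1 - n ≤ m * (p.1 - n) := Nat.le_mul_of_pos_left _ hm
      have a2 : p.2 ≤ n * p.2 := Nat.le_mul_of_pos_left _ hn
      refine ⟨⟨by omega, by omega⟩, by omega⟩
    · intro p hp
      simp only [Finset.mem_coe, Finset.mem_filter, Finset.mem_product, Finset.mem_range] at hp ⊢
      obtain ⟨⟨h1, h2⟩, h3⟩ := hp
      have key : m * (p.1 + n) = m * p.1 + m * n := by rw [Nat.mul_add]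
      have a1 : p.1 + n ≤ m * (p.1 + n) := Nat.le_mul_of_pos_left _ hm
      have a2 : p.2 ≤ n * p.2 := Nat.le_mul_of_pos_left _ hn
      refine ⟨⟨by omega, by omega⟩, by omega, by omega⟩
    · intro p hp; simp only [Finset.mem_coe, Finset.mem_filter, Finset.mem_product, Finset.mem_range] at hp
      ext <;> simp <;> omega
    · intro p _; ext <;> simp
  · rw [Finset.filter_filter]
    apply Finset.card_nbij' id id
    · intro p hp
      simp only [Finset.mem_coe, Finset.mem_filter, Finset.mem_product, Finset.mem_range, id] at hp ⊢
      omega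
    · intro p hp
      simp only [Finset.mem_coe, Finset.mem_filter, Finset.mem_product, Finset.mem_range, id] at hp ⊢
      have a1 : n ≤ m * n := Nat.le_mul_of_pos_left _ hm
      omega
    · intro p _; rfl
    · intro p _; rfl

theorem FW.strip_card {m n d : ℕ} (hm : 0 < m) (hn : 0 < n) (hd : m * n ≤ d) :
    ((Finset.range n ×ˢ Finset.range (d+1)).filter
        (fun p : ℕ × ℕ => m * p.1 + n * p.2 ≤ d)).card
      = ∑ j ∈ Finset.range n, ((d - m * j) / n + 1) := by
  classical
  have : ∑ j ∈ Finset.range n, ((d - m * j) / n + 1)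
      = ((Finset.range n).sigma (fun j => Finset.range ((d - m * j) / n + 1))).card := by
    rw [Finset.card_sigma]
    simp
  rw [this]
  apply Finset.card_nbij' (fun p : ℕ × ℕ => ⟨p.1, p.2⟩)
    (fun s : Σ _ : ℕ, ℕ => (s.1, s.2))
  · intro p hp
    simp only [Finset.mem_coe, Finset.mem_filter, Finset.mem_product, Finset.mem_range, Finset.mem_sigma] at hp ⊢
    obtain ⟨⟨h1, h2⟩, h3⟩ := hp
    refine ⟨h1, ?_⟩
    have hmj : m * (p.1 + 1) ≤ m * n := Nat.mul_le_mul (le_refl m) (by omega)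
    rw [Nat.mul_add, Nat.mul_one] at hmj
    have hcomm : p.2 * n = n * p.2 := Nat.mul_comm _ _
    have : p.2 ≤ (d - m * p.1) / n := Nat.le_div_iff_mul_le hn |>.2 (by omega)
    omega
  · intro s hs
    simp only [Finset.mem_coe, Finset.mem_filter, Finset.mem_product, Finset.mem_range, Finset.mem_sigma] at hs ⊢
    obtain ⟨h1, h2⟩ := hs
    have hmj : m * (s.1 + 1) ≤ m * n := Nat.mul_le_mul (le_refl m) (by omega)
    rw [Nat.mul_add, Nat.mul_one] at hmj
    have hcomm : s.2 * n = n * s.2 := Nat.mul_comm _ _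
    have h2' : s.2 ≤ (d - m * s.1) / n := by omega
    have := Nat.le_div_iff_mul_le hn |>.1 h2'
    have a2 : s.2 ≤ n * s.2 := Nat.le_mul_of_pos_left _ hn
    refine ⟨⟨?_, ?_⟩, ?_⟩ <;> omega
  · intro p _; rfl
  · intro s _; rfl

theorem FW.sum_mod_eq {m n d : ℕ} (hn : 0 < n) (hcop : Nat.Coprime m n)
    (hd : m * n ≤ d) :
    ∑ j ∈ Finset.range n, (d - m * j) % n = ∑ j ∈ Finset.range n, j := by
  classical
  have hmj : ∀ j, j < n → m * j ≤ d := by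
    intro j hj
    have := Nat.mul_le_mul (le_refl m) (show j ≤ n by omega)
    omega
  have hinj : ∀ j, j < n → ∀ j', j' < n →
      (d - m * j) % n = (d - m * j') % n → j = j' := by
    intro j hj j' hj' h
    have hmod : Nat.ModEq n (d - m * j) (d - m * j') := h
    have h1 := hmod.add_right (m * j + m * j')
    have e1 : d - m * j + (m * j + m * j') = d + m * j' := by
      have := hmj j hj; omega
    have e2 : d - m * j' + (m * j + m * j') = d + m * j := by
      have := hmj j' hj'; omega
    rw [e1, e2] at h1
    have h2 : Nat.ModEq n (m * j') (m * j) := (Nat.ModEq.add_left_cancel' d h1)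
    have h3 : Nat.ModEq n j' j := Nat.ModEq.cancel_left_of_coprime hcop.symm h2
    have : j' % n = j % n := h3
    rwa [Nat.mod_eq_of_lt hj', Nat.mod_eq_of_lt hj, eq_comm] at this
  set f : ℕ → ℕ := fun j => (d - m * j) % n with hf
  have hinj' : Set.InjOn f (Finset.range n) := by
    intro x hx y hy hxy
    simp only [Finset.coe_range, Set.mem_Iio] at hx hy
    exact hinj x hx y hy hxy
  have himage : (Finset.range n).image f = Finset.range n := by
    apply Finset.eq_of_subset_of_card_le
    · intro x hx
      simp only [Finset.mem_image] at hx
      obtain ⟨j, _, rfl⟩ := hx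
      simp only [Finset.mem_range, hf]
      exact Nat.mod_lt _ hn
    · rw [Finset.card_image_of_injOn hinj']
  have h2 := Finset.sum_image (g := f) (f := fun x : ℕ => x) (s := Finset.range n)
    (fun x hx y hy h => hinj' (by simpa using hx) (by simpa using hy) h)
  rw [himage] at h2
  exact h2.symm

theorem FW.strip_sum_eval {m n d : ℕ} (hm : 0 < m) (hn : 0 < n) (hcop : Nat.Coprime m n)
    (hd : m * n ≤ d) :
    2 * ((∑ j ∈ Finset.range n, ((d - m * j) / n + 1) : ℕ) : ℤ)
      + ((m : ℤ) - 1) * ((n : ℤ) - 1) = 2 * (d : ℤ) + 2 := by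
  classical
  have hmj : ∀ j, j < n → m * j ≤ d := by
    intro j hj
    have := Nat.mul_le_mul (le_refl m) (show j ≤ n by omega)
    omega
  set q : ℕ := ∑ j ∈ Finset.range n, (d - m * j) / n with hq
  set J : ℕ := ∑ j ∈ Finset.range n, j with hJ
  have key : n * q + J + m * J = n * d := by
    have : ∀ j ∈ Finset.range n, n * ((d - m * j) / n) + (d - m * j) % n + m * j = d := by
      intro j hj
      rw [Finset.mem_range] at hj
      have h1 := Nat.div_add_mod (d - m * j) n
      have h2 := hmj j hj
      omega
    have hsum := Finset.sum_congr rfl this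
    rw [Finset.sum_const, Finset.card_range, smul_eq_mul] at hsum
    rw [← hsum]
    rw [Finset.sum_add_distrib, Finset.sum_add_distrib, ← Finset.mul_sum, ← Finset.mul_sum]
    rw [FW.sum_mod_eq hn hcop hd]
  have hJ2 : 2 * J = n * (n - 1) := by
    rw [hJ, ← Finset.sum_range_id_mul_two n, mul_comm]
  have keyZ : (n : ℤ) * q + J + m * J = n * d := by exact_mod_cast key
  have hJ2Z : 2 * (J : ℤ) = n * ((n : ℤ) - 1) := by
    have h1 : (1 : ℕ) ≤ n := hn
    have h2 := hJ2
    zify [h1] at h2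
    exact h2
  have hsumq : (∑ j ∈ Finset.range n, ((d - m * j) / n + 1) : ℕ) = q + n := by
    rw [Finset.sum_add_distrib, Finset.sum_const, Finset.card_range, smul_eq_mul, mul_one]
  rw [hsumq]
  have hcancel : (n : ℤ) * (2 * q) = n * (2 * d - (1 + m) * ((n : ℤ) - 1)) := by
    linear_combination 2 * keyZ - (1 + (m : ℤ)) * hJ2Z
  have hnz : (n : ℤ) ≠ 0 := by exact_mod_cast hn.ne'
  have hq2 : 2 * (q : ℤ) = 2 * d - (1 + m) * ((n : ℤ) - 1) := mul_left_cancel₀ hnz hcancel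
  push_cast
  linear_combination hq2

theorem FW.cnt_step {m n : ℕ} (hm : 0 < m) (hn : 0 < n) (hcop : Nat.Coprime m n) :
    ∀ d : ℕ, m * n ≤ d → 2 * (FW.cnt m n d : ℤ) = 2 * (FW.cnt m n (d - m * n) : ℤ)
      + 2 * (d : ℤ) + 2 - ((m : ℤ) - 1) * ((n : ℤ) - 1) := by
  intro d hd
  rw [FW.cnt_split hm hn hd, FW.strip_card hm hn hd]
  have := FW.strip_sum_eval hm hn hcop hd
  push_cast
  push_cast at this
  linarith

theorem FW.cnt_iter {m n : ℕ} (hm : 0 < m) (hn : 0 < n) (hcop : Nat.Coprime m n) :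
    ∀ i d : ℕ, i * (m * n) ≤ d →
      2 * (FW.cnt m n d : ℤ) = 2 * (FW.cnt m n (d - i * (m * n)) : ℤ)
      + i * (2 * (d : ℤ) + 2) - i * ((m : ℤ) - 1) * ((n : ℤ) - 1)
      - (m : ℤ) * n * i * (i - 1) := by
  intro i
  induction i with
  | zero => intro d _; simp
  | succ i ih =>
    intro d hd
    have hkey : (i + 1) * (m * n) = i * (m * n) + m * n := by ring
    have h1 : i * (m * n) ≤ d := by omega
    have h2 : m * n ≤ d - i * (m * n) := by omega
    have hIH := ih d h1
    have hstep := FW.cnt_step hm hn hcop (d - i * (m * n)) h2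
    have hsub : d - i * (m * n) - m * n = d - (i + 1) * (m * n) := by omega
    rw [hsub] at hstep
    have hcast : ((d - i * (m * n) : ℕ) : ℤ) = (d : ℤ) - i * (m * n) := by
      push_cast [Nat.cast_sub h1]; ring
    rw [hcast] at hstep
    rw [hIH, hstep]
    push_cast
    ring

theorem FW.genus_exists (a m n : ℕ) (ha : 0 < a) (hm : 0 < m) (hn : 0 < n)
    (hcop : Nat.Coprime m n) (hmn : m < n) :
    ∃ g : ℕ, 2 * (g : ℤ) = ((a * m : ℤ) - 1) * ((a * n : ℤ) - 2) + (a : ℤ) * ((m : ℤ) - 1) := by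
  set G : ℤ := ((a * m : ℤ) - 1) * ((a * n : ℤ) - 2) + (a : ℤ) * ((m : ℤ) - 1) with hG
  have hn2 : 2 ≤ n := by omega
  have h1 : (1 : ℤ) ≤ (a : ℤ) * m := by exact_mod_cast Nat.one_le_iff_ne_zero.2 (by positivity)
  have h2 : (2 : ℤ) ≤ (a : ℤ) * n := by
    have : 2 ≤ a * n := le_trans hn2 (Nat.le_mul_of_pos_left _ ha)
    exact_mod_cast this
  have h3 : (1 : ℤ) ≤ (m : ℤ) := by exact_mod_cast hm
  have hGnonneg : 0 ≤ G := by
    apply add_nonneg (mul_nonneg (by linarith) (by linarith))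
    apply mul_nonneg (by positivity) (by linarith)
  have hdvd : (2 : ℤ) ∣ G := by
    have hZ : ((G : ZMod 2) = 0) → (2 : ℤ) ∣ G := fun h =>
      (ZMod.intCast_zmod_eq_zero_iff_dvd G 2).1 (by exact_mod_cast h)
    apply hZ
    have hcast : (G : ZMod 2) = ((a : ZMod 2) * m - 1) * ((a : ZMod 2) * n - 2)
        + (a : ZMod 2) * ((m : ZMod 2) - 1) := by
      rw [hG]; push_cast; ring
    have hall : ∀ x : ZMod 2, x = 0 ∨ x = 1 := by decide
    have hnm : ¬((m : ZMod 2) = 0 ∧ (n : ZMod 2) = 0) := by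
      rintro ⟨hm0, hn0⟩
      have dm : 2 ∣ m := (ZMod.natCast_eq_zero_iff m 2).1 hm0
      have dn : 2 ∣ n := (ZMod.natCast_eq_zero_iff n 2).1 hn0
      have := Nat.dvd_gcd dm dn
      rw [hcop] at this
      norm_num at this
    rw [hcast]
    rcases hall (a : ZMod 2) with h | h <;> rcases hall (m : ZMod 2) with h' | h' <;>
      rcases hall (n : ZMod 2) with h'' | h''
    all_goals (rw [h', h''] at hnm; rw [h, h', h'']; revert hnm; decide)
  obtain ⟨k, hk⟩ := hdvd
  refine ⟨k.toNat, ?_⟩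
  have hk0 : 0 ≤ k := by linarith [hGnonneg, hk]
  rw [hk, Int.toNat_of_nonneg hk0]

end Aux

/-- The Fermat-type curve `C : x₀^(amn) + x₁^(an) = x₂^(am)` of degree `amn` on
`ℙ(1,m,n)` (with `gcd(m,n) = 1`, `m < n`) is a smooth projective curve of genus
`((am-1)(an-2) + a(m-1))/2`.  Smoothness is expressed by: the affine cone over `C` is
smooth away from the origin, and `C` avoids the two singular points `[0,0,1]`, `[0,1,0]`
of `ℙ(1,m,n)`.  The genus `g` is expressed through the Hilbert function of the
homogeneous coordinate ring: `dim_ℂ A_d = a·d + 1 - g` for all large `d`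
(Riemann–Roch: `χ(O_C(d)) = deg(O_C(d)) + 1 - g` with `deg O_C(1) = a`). -/
theorem fermat_type_curve_smooth_and_genus (a m n : ℕ) (ha : 0 < a) (hm : 0 < m)
    (hn : 0 < n) (hcop : Nat.Coprime m n) (hmn : m < n) :
    (∀ p : Fin 3 → ℂ, p ≠ 0 → eval p (fermatPoly a m n) = 0 →
      ∃ i : Fin 3, eval p (pderiv i (fermatPoly a m n)) ≠ 0) ∧
    (∀ x2 : ℂ, eval ![0, 0, x2] (fermatPoly a m n) = 0 → x2 = 0) ∧
    (∀ x1 : ℂ, eval ![0, x1, 0] (fermatPoly a m n) = 0 → x1 = 0) ∧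
    ∃ g : ℕ, 2 * (g : ℤ) = ((a * m : ℤ) - 1) * ((a * n : ℤ) - 2) + (a : ℤ) * ((m : ℤ) - 1) ∧
      ∃ N : ℕ, ∀ d : ℕ, N ≤ d →
        (Module.finrank ℂ (fermatCoordRingPiece a m n d) : ℤ) = a * d + 1 - g := by
  refine ⟨?_, ?_, ?_, ?_⟩
  · -- smoothness of the affine cone away from 0
    intro p hp _
    have h0 : eval p (pderiv 0 (fermatPoly a m n)) = (a*m*n) * p 0 ^ (a*m*n - 1) := by
      simp [fermatPoly, pderiv_pow, pderiv_X]
    have h1 : eval p (pderiv 1 (fermatPoly a m n)) = (a*n) * p 1 ^ (a*n - 1) := by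
      simp [fermatPoly, pderiv_pow, pderiv_X]
    have h2 : eval p (pderiv 2 (fermatPoly a m n)) = -((a*m) * p 2 ^ (a*m - 1)) := by
      simp [fermatPoly, pderiv_pow, pderiv_X]
    have hn2 : 2 ≤ n := by omega
    by_cases ham : a * m = 1
    · have ha1 : a = 1 := Nat.eq_one_of_mul_eq_one_right ham
      have hm1 : m = 1 := Nat.eq_one_of_mul_eq_one_left ham
      refine ⟨2, ?_⟩
      rw [h2, ha1, hm1]
      norm_num
    · have h1am : 1 ≤ a * m := Nat.one_le_iff_ne_zero.2 (by positivity)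
      have hA : 2 ≤ a * m * n := le_trans (by norm_num) (Nat.mul_le_mul h1am hn2)
      have hB : 2 ≤ a * n := le_trans (by norm_num) (Nat.mul_le_mul ha hn2)
      have hC : 2 ≤ a * m := by omega
      by_contra hall
      push_neg at hall
      apply hp
      have e0 := hall 0; rw [h0] at e0
      have e1 := hall 1; rw [h1] at e1
      have e2 := hall 2; rw [h2] at e2
      have z0 : p 0 = 0 := by
        rcases mul_eq_zero.1 e0 with h | h
        · exfalso; rcases mul_eq_zero.1 h with h' | h'
          · rcases mul_eq_zero.1 h' with h'' | h'' <;> norm_cast at h'' <;> omega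
          · norm_cast at h'; omega
        · exact pow_eq_zero_iff (by omega) |>.1 h
      have z1 : p 1 = 0 := by
        rcases mul_eq_zero.1 e1 with h | h
        · exfalso; rcases mul_eq_zero.1 h with h' | h' <;> norm_cast at h' <;> omega
        · exact pow_eq_zero_iff (by omega) |>.1 h
      have z2 : p 2 = 0 := by
        rw [neg_eq_zero] at e2
        rcases mul_eq_zero.1 e2 with h | h
        · exfalso; rcases mul_eq_zero.1 h with h' | h' <;> norm_cast at h' <;> omega
        · exact pow_eq_zero_iff (by omega) |>.1 h
      funext i
      fin_cases i <;> simp [z0, z1, z2]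
  · -- the curve avoids [0,0,1]
    intro x2 h
    have hamn : a * m * n ≠ 0 := by positivity
    have han : a * n ≠ 0 := by positivity
    simp [fermatPoly, zero_pow hamn, zero_pow han] at h
    exact h.1
  · -- the curve avoids [0,1,0]
    intro x1 h
    have hamn : a * m * n ≠ 0 := by positivity
    have ham : a * m ≠ 0 := by positivity
    simp [fermatPoly, zero_pow hamn, zero_pow ham] at h
    exact h.1
  · -- the genus computation
    obtain ⟨g, hg⟩ := FW.genus_exists a m n ha hm hn hcop hmn
    refine ⟨g, hg, a * m * n, ?_⟩
    intro d hd
    have hwnz : ∀ i : Fin 3, (![1, m, n] : Fin 3 → ℕ) i ≠ 0 := by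
      intro i
      fin_cases i <;> simp <;> omega
    have hF : IsWeightedHomogeneous ![1, m, n] (fermatPoly a m n) (a * m * n) :=
      FW.fermat_whom a m n
    have hFne : fermatPoly a m n ≠ 0 := by
      intro h
      have he : eval ![1, 1, 1] (fermatPoly a m n) = 1 := by simp [fermatPoly]
      rw [h] at he
      simp at he
    haveI := FW.findim_weightPiece hwnz d
    have h1 : Module.finrank ℂ (fermatCoordRingPiece a m n d)
        + Module.finrank ℂ (weightedHomogeneousSubmodule ℂ ![1, m, n] (d - a * m * n))
        = Module.finrank ℂ (weightedHomogeneousSubmodule ℂ ![1, m, n] d) :=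
      FW.finrank_quotient_piece hF hFne hd
    have h2 : Module.finrank ℂ (weightedHomogeneousSubmodule ℂ ![1, m, n] d)
        = FW.cnt m n d :=
      (FW.finrank_weightPiece hwnz d).trans (FW.card_weight_eq_cnt hm hn d)
    have h3 : Module.finrank ℂ (weightedHomogeneousSubmodule ℂ ![1, m, n] (d - a * m * n))
        = FW.cnt m n (d - a * m * n) :=
      (FW.finrank_weightPiece hwnz _).trans (FW.card_weight_eq_cnt hm hn _)
    have hassoc : a * (m * n) = a * m * n := by ring
    have h4 := FW.cnt_iter hm hn hcop a d (by omega)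
    rw [hassoc] at h4
    have hfr : (Module.finrank ℂ (fermatCoordRingPiece a m n d) : ℤ)
        = (FW.cnt m n d : ℤ) - (FW.cnt m n (d - a * m * n) : ℤ) := by
      rw [h2, h3] at h1
      push_cast [← h1]
      ring
    have htwo : 2 * (Module.finrank ℂ (fermatCoordRingPiece a m n d) : ℤ)
        = 2 * ((a : ℤ) * d + 1 - g) := by
      rw [hfr]
      linear_combination h4 + hg
    linarith
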